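/- Let G be a topological group and let C be a nonempty family of subgroups of G that is totally ordered by inclusion, such that for every K ∈ C the pair (G,K) is relatively extremely amenable. Then the pair (G, ⋃C) is relatively extremely amenable, where ⋃C denotes the union of the subgroups in C (which is a subgroup of G). -/

import Mathlib

/-- A topological group `G` is *extremely amenable* if every continuous action of `G`
on a nonempty compact Hausdorff space has a `G`-fixed point. -/
def ExtremelyAmenable (G : Type) [Group G] [TopologicalSpace G] : Prop :=
  ∀ (X : Type) [TopologicalSpace X] [CompactSpace X] [T2Space X] [Nonempty X]
    [MulAction G X] [ContinuousSMul G X], ∃ x : X, ∀ g : G, g • x = x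

/-- The pair `(G, H)` is *relatively extremely amenable* if every continuous action of `G`
on a nonempty compact Hausdorff space has a point fixed by every element of `H`. -/
def RelativelyExtremelyAmenable (G : Type) [Group G] [TopologicalSpace G] (H : Subgroup G) :
    Prop :=
  ∀ (X : Type) [TopologicalSpace X] [CompactSpace X] [T2Space X] [Nonempty X]
    [MulAction G X] [ContinuousSMul G X], ∃ x : X, ∀ h ∈ H, h • x = x

/-- If `C` is a nonempty chain of subgroups of `G` such that `(G, K)` is relatively
extremely amenable for every `K ∈ C`, then `(G, ⋃ C)` is relatively extremely amenable,
where `⋃ C` is the subgroup of `G` whose underlying set is the union of the members of `C`. -/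
theorem relativelyExtremelyAmenable_sUnion_chain
    (G : Type) [Group G] [TopologicalSpace G] [IsTopologicalGroup G]
    (C : Set (Subgroup G)) (hne : C.Nonempty) (hchain : IsChain (· ≤ ·) C)
    (hrea : ∀ K ∈ C, RelativelyExtremelyAmenable G K)
    (U : Subgroup G) (hU : (U : Set G) = ⋃ K ∈ C, (K : Set G)) :
    RelativelyExtremelyAmenable G U := by
  intro X _ _ _ _ _ _
  haveI : Nonempty C := hne.to_subtype
  set F : C → Set X := fun K => {x : X | ∀ h ∈ (K : Subgroup G), h • x = x} with hF
  have hcl : ∀ K : C, IsClosed (F K) := by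
    intro K
    have : F K = ⋂ h ∈ (K : Subgroup G), {x : X | h • x = x} := by
      ext x; simp [hF, Set.mem_iInter]
    rw [this]
    exact isClosed_biInter fun h _ =>
      isClosed_eq (continuous_const_smul h) continuous_id
  have hdir : Directed (· ⊇ ·) F := by
    intro K L
    rcases eq_or_ne K L with rfl | hne'
    · exact ⟨K, le_refl _, le_refl _⟩
    rcases hchain K.2 L.2 (fun h => hne' (Subtype.ext h)) with h | h
    · exact ⟨L, fun x hx g hg => hx g (h hg), le_refl _⟩
    · exact ⟨K, le_refl _, fun x hx g hg => hx g (h hg)⟩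
  have hn : ∀ K : C, (F K).Nonempty := fun K => hrea K K.2 X
  obtain ⟨x, hx⟩ := IsCompact.nonempty_iInter_of_directed_nonempty_isCompact_isClosed F hdir hn
    (fun K => (hcl K).isCompact) hcl
  refine ⟨x, fun h hh => ?_⟩
  have : h ∈ (U : Set G) := hh
  rw [hU] at this
  simp only [Set.mem_iUnion] at this
  obtain ⟨K, hK, hhK⟩ := this
  exact (Set.mem_iInter.1 hx ⟨K, hK⟩) h hhK
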